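/- arXiv:2407.15760 — 2 statements merged into one kernel-verified Lean document; each statement's English description precedes it below -/
import Mathlib

section
/- The value function is rotationally monotone from the road toward the vertical axis: for every r > 0 and all angles 0 ≤ ϑ₁ ≤ ϑ₂ ≤ π/2 (measured from the positive y-axis toward the positive x-axis), one has J(r sin ϑ₂, r cos ϑ₂) ≤ J(r sin ϑ₁, r cos ϑ₁). -/
open Real Filter Set

noncomputable section

/-- The field Lagrangian `L_f(v₁,v₂) = (v₁² + v₂²)/4 − 1`. -/
def Lf (v₁ v₂ : ℝ) : ℝ := (v₁ ^ 2 + v₂ ^ 2) / 4 - 1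

/-- The effective road Hamiltonian `H_r(q) = q² + (p_q)² + 1` built from the
critical-slope function `pq`. -/
def Hr (pq : ℝ → ℝ) (q : ℝ) : ℝ := q ^ 2 + pq q ^ 2 + 1

/-- The road Lagrangian: the Legendre transform of `Hr`. -/
def Lr (pq : ℝ → ℝ) (v : ℝ) : ℝ := ⨆ q : ℝ, (v * q - Hr pq q)

/-- `pq` assigns to each `q` the critical slope `p_q`: it equals `0` when
`(D−1)q² ≤ 1`, and otherwise it is the unique positive root of
`(D−1)q² = p² + 1 + μp/(κν + p)`. -/
def IsCriticalSlope (D μ ν κ : ℝ) (pq : ℝ → ℝ) : Prop :=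
  ∀ q : ℝ,
    ((D - 1) * q ^ 2 ≤ 1 → pq q = 0) ∧
    (1 < (D - 1) * q ^ 2 →
      0 < pq q ∧ (D - 1) * q ^ 2 = pq q ^ 2 + 1 + μ * pq q / (κ * ν + pq q))

/-- The set of candidate costs in the control problem at a point `(x,y)` with
`x ≥ 0`, `y ≥ 0`: the pure-field cost, the broken road-then-field costs, and
(when `y = 0`) the pure-road cost. -/
def Jset (pq : ℝ → ℝ) (x y : ℝ) : Set ℝ :=
  {Lf x y} ∪
    {c | ∃ τ z : ℝ, 0 < τ ∧ τ < 1 ∧ 0 ≤ z ∧ z ≤ x ∧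
      c = (1 - τ) * Lf ((x - z) / (1 - τ)) (y / (1 - τ)) + τ * Lr pq (z / τ)} ∪
    (if y = 0 then {Lr pq x} else ∅)

/-- The value function `J(x,y)`, extended evenly in `x`. -/
def J (pq : ℝ → ℝ) (x y : ℝ) : ℝ := sInf (Jset pq |x| y)
/-- The field Hamiltonian `H_f(q,p) = q² + p² + 1`. -/
def Hf (q p : ℝ) : ℝ := q ^ 2 + p ^ 2 + 1

/-- The road boundary Hamiltonian `F₀(q,p) = Dq² − μp/(κν + p)`. -/
def F0 (D μ ν κ q p : ℝ) : ℝ := D * q ^ 2 - μ * p / (κ * ν + p)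

/-- The spreading speed along the road, `inf_{q>0} H_r(q)/q`. -/
def roadSpeed (pq : ℝ → ℝ) : ℝ := sInf ((fun q => Hr pq q / q) '' Set.Ioi (0 : ℝ))

/-- The directional spreading speed in direction `ϑ` (measured from the
positive `y`-axis). -/
def cstar (pq : ℝ → ℝ) (ϑ : ℝ) : ℝ :=
  sSup {r : ℝ | 0 ≤ r ∧ J pq (r * Real.sin ϑ) (r * Real.cos ϑ) ≤ 0}

/-- Reflection across the line through the origin in direction `(cos a, sin a)`. -/
def Psi (a : ℝ) (p : ℝ × ℝ) : ℝ × ℝ :=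
  (p.1 * Real.cos (2 * a) + p.2 * Real.sin (2 * a),
   p.1 * Real.sin (2 * a) - p.2 * Real.cos (2 * a))

/-- The closed cone of opening angle `2a` between the positive `x`-axis and the
ray at angle `π/2 − 2a` from the positive `y`-axis. -/
def coneA (a : ℝ) : Set (ℝ × ℝ) :=
  {p | ∃ r ϑ : ℝ, 0 ≤ r ∧ π / 2 - 2 * a ≤ ϑ ∧ ϑ ≤ π / 2 ∧
    p = (r * Real.sin ϑ, r * Real.cos ϑ)}

lemma Lr_bddAbove (pq : ℝ → ℝ) (v : ℝ) :
    BddAbove (Set.range fun q => v * q - Hr pq q) := by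
  refine ⟨v ^ 2 / 4 - 1, ?_⟩
  rintro _ ⟨q, rfl⟩
  have h1 := sq_nonneg (v / 2 - q)
  have h2 := sq_nonneg (pq q)
  simp only [Hr]
  nlinarith

lemma Lr_ge_neg_one {D μ ν κ : ℝ} {pq : ℝ → ℝ} (hpq : IsCriticalSlope D μ ν κ pq)
    (v : ℝ) : -1 ≤ Lr pq v := by
  have h0 : pq 0 = 0 := (hpq 0).1 (by norm_num)
  have h := le_ciSup (Lr_bddAbove pq v) 0
  simpa [Hr, h0, Lr] using h

lemma Lf_ge_neg_one (x y : ℝ) : -1 ≤ Lf x y := by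
  simp only [Lf]; nlinarith [sq_nonneg x, sq_nonneg y]

lemma Jset_mem_ge {D μ ν κ : ℝ} {pq : ℝ → ℝ} (hpq : IsCriticalSlope D μ ν κ pq)
    (x y : ℝ) : ∀ c ∈ Jset pq x y, -1 ≤ c := by
  intro c hc
  rcases hc with (hc | hc) | hc
  · rw [Set.mem_singleton_iff] at hc; subst hc; exact Lf_ge_neg_one x y
  · obtain ⟨τ, z, hτ0, hτ1, hz0, hzx, rfl⟩ := hc
    have hA := Lf_ge_neg_one ((x - z) / (1 - τ)) (y / (1 - τ))
    have hB := Lr_ge_neg_one hpq (z / τ)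
    nlinarith
  · split_ifs at hc with hy
    · rw [Set.mem_singleton_iff] at hc; subst hc; exact Lr_ge_neg_one hpq x
    · exact absurd hc (Set.notMem_empty c)

/-- Rotational monotonicity of the value function from the road toward the
vertical axis: for `r > 0` and angles `0 ≤ ϑ₁ ≤ ϑ₂ ≤ π/2` measured from the
positive `y`-axis, `J(r sin ϑ₂, r cos ϑ₂) ≤ J(r sin ϑ₁, r cos ϑ₁)`. -/
theorem J_rotationally_monotone
    (D μ ν κ : ℝ) (hD : 1 < D) (hμ : 0 < μ) (hν : 0 < ν) (hκ : 0 < κ)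
    (pq : ℝ → ℝ) (hpq : IsCriticalSlope D μ ν κ pq)
    (r ϑ₁ ϑ₂ : ℝ) (hr : 0 < r) (h1 : 0 ≤ ϑ₁) (h12 : ϑ₁ ≤ ϑ₂) (h2 : ϑ₂ ≤ π / 2) :
    J pq (r * Real.sin ϑ₂) (r * Real.cos ϑ₂) ≤
      J pq (r * Real.sin ϑ₁) (r * Real.cos ϑ₁) := by
  obtain h12' | h12' := h12.eq_or_lt
  · rw [h12']
  have hπ : (0 : ℝ) < π := Real.pi_pos
  set x₁ := r * Real.sin ϑ₁ with hx₁
  set y₁ := r * Real.cos ϑ₁ with hy₁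
  set x₂ := r * Real.sin ϑ₂ with hx₂
  set y₂ := r * Real.cos ϑ₂ with hy₂
  have hϑ1le : ϑ₁ ≤ π / 2 := h12.trans h2
  have hs1 : 0 ≤ Real.sin ϑ₁ :=
    Real.sin_nonneg_of_nonneg_of_le_pi h1 (by linarith)
  have hs2 : 0 ≤ Real.sin ϑ₂ :=
    Real.sin_nonneg_of_nonneg_of_le_pi (h1.trans h12) (by linarith)
  have hx1n : 0 ≤ x₁ := mul_nonneg hr.le hs1
  have hx2n : 0 ≤ x₂ := mul_nonneg hr.le hs2
  have hsin : Real.sin ϑ₁ ≤ Real.sin ϑ₂ :=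
    Real.strictMonoOn_sin.monotoneOn ⟨by linarith, by linarith⟩
      ⟨by linarith, h2⟩ h12
  have hxle : x₁ ≤ x₂ := mul_le_mul_of_nonneg_left hsin hr.le
  have hr1 : x₁ ^ 2 + y₁ ^ 2 = r ^ 2 := by
    rw [hx₁, hy₁]; linear_combination r ^ 2 * Real.sin_sq_add_cos_sq ϑ₁
  have hr2 : x₂ ^ 2 + y₂ ^ 2 = r ^ 2 := by
    rw [hx₂, hy₂]; linear_combination r ^ 2 * Real.sin_sq_add_cos_sq ϑ₂
  have bdd : BddBelow (Jset pq x₂ y₂) := ⟨-1, fun c hc => Jset_mem_ge hpq _ _ c hc⟩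
  simp only [J]
  rw [abs_of_nonneg hx1n, abs_of_nonneg hx2n]
  have hne : (Jset pq x₁ y₁).Nonempty := ⟨Lf x₁ y₁, by
    unfold Jset; exact Set.mem_union_left _ (Set.mem_union_left _ rfl)⟩
  apply le_csInf hne
  intro c hc
  rcases hc with (hc | hc) | hc
  · rw [Set.mem_singleton_iff] at hc
    have hmem : Lf x₂ y₂ ∈ Jset pq x₂ y₂ := by
      unfold Jset; exact Set.mem_union_left _ (Set.mem_union_left _ rfl)
    calc sInf (Jset pq x₂ y₂) ≤ Lf x₂ y₂ := csInf_le bdd hmem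
      _ = Lf x₁ y₁ := by simp only [Lf]; rw [hr1, hr2]
      _ = c := hc.symm
  · obtain ⟨τ, z, hτ0, hτ1, hz0, hzx, rfl⟩ := hc
    have h1τ : (0 : ℝ) < 1 - τ := by linarith
    have key : (x₂ - z) ^ 2 + y₂ ^ 2 ≤ (x₁ - z) ^ 2 + y₁ ^ 2 := by
      nlinarith [mul_le_mul_of_nonneg_left hxle hz0]
    have e : ∀ u w : ℝ, (1 - τ) * Lf (u / (1 - τ)) (w / (1 - τ)) =
        (u ^ 2 + w ^ 2) / (4 * (1 - τ)) - (1 - τ) := by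
      intro u w; simp only [Lf]; field_simp
    have hmem : ((1 - τ) * Lf ((x₂ - z) / (1 - τ)) (y₂ / (1 - τ)) + τ * Lr pq (z / τ))
        ∈ Jset pq x₂ y₂ := by
      unfold Jset
      exact Set.mem_union_left _ (Set.mem_union_right _
        ⟨τ, z, hτ0, hτ1, hz0, hzx.trans hxle, rfl⟩)
    refine le_trans (csInf_le bdd hmem) ?_
    rw [e, e]
    have hdiv : (x₂ - z) ^ 2 + y₂ ^ 2 ≤ (x₁ - z) ^ 2 + y₁ ^ 2 := key
    gcongr
  · split_ifs at hc with hy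
    · exfalso
      rw [hy₁] at hy
      have hcos : Real.cos ϑ₁ = 0 := by
        rcases mul_eq_zero.mp hy with h | h
        · exact absurd h hr.ne'
        · exact h
      have hpos : 0 < Real.cos ϑ₁ := by
        apply Real.cos_pos_of_mem_Ioo
        constructor <;> [linarith; linarith]
      linarith
    · exact absurd hc (Set.notMem_empty c)
end
end

section
/- Fix a ∈ (0, π/2) and define the conical Wulff shape W_a = { (x,y) ∈ Ω̄_a : min{ J(x,y), J(Ψ_a(x,y)) } ≤ 0 }. If D ≥ 4(2+μ)²/sin²(2a), then W_a is not a convex subset of ℝ². -/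
open Real Filter Set

noncomputable section

section Aux

variable (pq : ℝ → ℝ)

lemma lr_bddAbove (v : ℝ) : BddAbove (Set.range fun q => v * q - Hr pq q) := by
  refine ⟨v ^ 2 / 4 - 1, ?_⟩
  rintro _ ⟨q, rfl⟩
  have h1 := sq_nonneg (v / 2 - q)
  have h2 := sq_nonneg (pq q)
  simp only [Hr]
  nlinarith

lemma lr_ge_neg_one (hpq0 : pq 0 = 0) (v : ℝ) : -1 ≤ Lr pq v := by
  have h := le_ciSup (lr_bddAbove pq v) 0
  simp only [Hr, hpq0] at h
  calc (-1 : ℝ) = v * 0 - (0 ^ 2 + 0 ^ 2 + 1) := by ring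
    _ ≤ Lr pq v := h

lemma jset_lb (hpq0 : pq 0 = 0) (x y : ℝ) (c : ℝ) (hc : c ∈ Jset pq x y) :
    -1 ≤ c := by
  rcases hc with ((hc | hc) | hc)
  · rcases hc with rfl
    have := sq_nonneg x; have := sq_nonneg y
    simp only [Lf]; nlinarith
  · obtain ⟨τ, z, hτ0, hτ1, hz0, hzx, rfl⟩ := hc
    have h1 : (-1 : ℝ) ≤ Lf ((x - z) / (1 - τ)) (y / (1 - τ)) := by
      simp only [Lf]; nlinarith [sq_nonneg ((x - z) / (1 - τ)), sq_nonneg (y / (1 - τ))]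
    have h2 := lr_ge_neg_one pq hpq0 (z / τ)
    nlinarith
  · by_cases hy : y = 0
    · rw [if_pos hy] at hc; rcases hc with rfl
      exact lr_ge_neg_one pq hpq0 x
    · rw [if_neg hy] at hc; exact absurd hc (Set.notMem_empty c)

lemma jset_bddBelow (hpq0 : pq 0 = 0) (x y : ℝ) : BddBelow (Jset pq x y) :=
  ⟨-1, fun c hc => jset_lb pq hpq0 x y c hc⟩

lemma jset_nonempty (x y : ℝ) : (Jset pq x y).Nonempty :=
  ⟨Lf x y, Or.inl (Or.inl rfl)⟩

/-- For `y ≠ 0`, every candidate cost is at least `y²/4 - 1`. -/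
lemma jset_lb_y (hpq0 : pq 0 = 0) (x y : ℝ) (hy : y ≠ 0) (c : ℝ)
    (hc : c ∈ Jset pq x y) : y ^ 2 / 4 - 1 ≤ c := by
  rcases hc with ((hc | hc) | hc)
  · rcases hc with rfl
    simp only [Lf]; nlinarith [sq_nonneg x]
  · obtain ⟨τ, z, hτ0, hτ1, hz0, hzx, rfl⟩ := hc
    have h2 := lr_ge_neg_one pq hpq0 (z / τ)
    have h1τ : (0 : ℝ) < 1 - τ := by linarith
    have key : y ^ 2 / (4 * (1 - τ)) - (1 - τ) ≤ (1 - τ) * Lf ((x - z) / (1 - τ)) (y / (1 - τ)) := by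
      simp only [Lf]
      rw [div_pow, div_pow]
      have hne : (1 - τ) ≠ 0 := ne_of_gt h1τ
      field_simp
      nlinarith [sq_nonneg (x - z), sq_nonneg (1 - τ), sq_nonneg y]
    have hy4 : y ^ 2 / 4 ≤ y ^ 2 / (4 * (1 - τ)) := by
      apply div_le_div_of_nonneg_left (sq_nonneg y) (by linarith)
      nlinarith
    nlinarith
  · rw [if_neg hy] at hc; exact absurd hc (Set.notMem_empty c)

/-- Lower bound `y²/4 - 1 ≤ J(x,y)` when `y ≠ 0`. -/
lemma J_lb (hpq0 : pq 0 = 0) (x y : ℝ) (hy : y ≠ 0) : y ^ 2 / 4 - 1 ≤ J pq x y :=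
  le_csInf (jset_nonempty pq _ _) (fun c hc => jset_lb_y pq hpq0 _ y hy c hc)

end Aux

/-- Key lower bound on the effective road Hamiltonian:
`Hr(q) ≥ D q²/(2(1+μ)) + 1/2`. -/
lemma hr_lb (D μ ν κ : ℝ) (hD : 1 < D) (hμ : 0 < μ) (hν : 0 < ν) (hκ : 0 < κ)
    (pq : ℝ → ℝ) (hpq : IsCriticalSlope D μ ν κ pq) (q : ℝ) :
    D * q ^ 2 / (2 * (1 + μ)) + 1 / 2 ≤ Hr pq q := by
  rcases le_or_gt ((D - 1) * q ^ 2) 1 with h | h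
  · have h0 := (hpq q).1 h
    simp only [Hr, h0]
    rw [div_add' _ _ _ (by positivity), div_le_iff₀ (by positivity)]
    nlinarith [sq_nonneg q]
  · obtain ⟨hp, heq⟩ := (hpq q).2 h
    set p := pq q with hpdef
    have hden : 0 < κ * ν + p := by positivity
    have hfrac : μ * p / (κ * ν + p) ≤ μ := by
      rw [div_le_iff₀ hden]; nlinarith [mul_pos (mul_pos hμ hκ) hν]
    have hpsq : (D - 1) * q ^ 2 - 1 - μ ≤ p ^ 2 := by nlinarith
    simp only [Hr]
    rw [div_add' _ _ _ (by positivity), div_le_iff₀ (by positivity)]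
    nlinarith [sq_nonneg q, sq_nonneg p, mul_nonneg hμ.le (sq_nonneg q)]

/-- Nonconvexity of the conical Wulff shape for large `D`: if
`D ≥ 4(2+μ)²/sin²(2a)` with `a ∈ (0, π/2)`, then
`W_a = {(x,y) ∈ Ω̄_a : min{J(x,y), J(Ψ_a(x,y))} ≤ 0}` is not convex. -/
theorem conical_wulff_nonconvex
    (D μ ν κ : ℝ) (hD : 1 < D) (hμ : 0 < μ) (hν : 0 < ν) (hκ : 0 < κ)
    (pq : ℝ → ℝ) (hpq : IsCriticalSlope D μ ν κ pq)
    (a : ℝ) (ha0 : 0 < a) (ha : a < π / 2)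
    (hDa : 4 * (2 + μ) ^ 2 / Real.sin (2 * a) ^ 2 ≤ D) :
    ¬ Convex ℝ {p : ℝ × ℝ | p ∈ coneA a ∧
        min (J pq p.1 p.2) (J pq (Psi a p).1 (Psi a p).2) ≤ 0} := by
  set s := Real.sin (2 * a) with hs_def
  set c := Real.cos (2 * a) with hc_def
  have hs : 0 < s := Real.sin_pos_of_pos_of_lt_pi (by linarith) (by linarith)
  have hcs : s ^ 2 + c ^ 2 = 1 := Real.sin_sq_add_cos_sq (2 * a)
  set R := Real.sqrt (D / (1 + μ)) with hR_def
  have hR0 : 0 ≤ R := Real.sqrt_nonneg _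
  have hR2 : R ^ 2 = D / (1 + μ) := Real.sq_sqrt (by positivity)
  have hpq0 : pq 0 = 0 := (hpq 0).1 (by nlinarith)
  -- D s² ≥ 4(2+μ)²
  have hDs : 4 * (2 + μ) ^ 2 ≤ D * s ^ 2 := by
    rw [div_le_iff₀ (by positivity)] at hDa
    linarith
  -- R s > 4
  have hRs : 4 < R * s := by
    have h1 : (R * s) ^ 2 = D * s ^ 2 / (1 + μ) := by
      rw [mul_pow, hR2]; ring
    have h2 : 16 < (R * s) ^ 2 := by
      rw [h1, lt_div_iff₀ (by positivity)]
      nlinarith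
    nlinarith [mul_nonneg hR0 hs.le]
  -- Lr pq R ≤ 0
  have hLr : Lr pq R ≤ 0 := by
    apply ciSup_le
    intro q
    have h1 := hr_lb D μ ν κ hD hμ hν hκ pq hpq q
    have h2 : R * q ≤ D * q ^ 2 / (2 * (1 + μ)) + 1 / 2 := by
      have hDq : D * q ^ 2 = (1 + μ) * (R * q) ^ 2 := by
        rw [mul_pow, hR2]; field_simp
      rw [hDq, div_add' _ _ _ (by positivity : (2 * (1 + μ) : ℝ) ≠ 0),
        le_div_iff₀ (by positivity)]
      nlinarith [mul_nonneg (by linarith : (0:ℝ) ≤ 1 + μ) (sq_nonneg (R * q - 1))]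
    linarith
  -- J pq R 0 ≤ 0
  have hJR : J pq R 0 ≤ 0 := by
    have hmem : Lr pq R ∈ Jset pq |R| 0 := by
      right
      rw [if_pos rfl, abs_of_nonneg hR0]
      rfl
    exact (csInf_le (jset_bddBelow pq hpq0 _ _) hmem).trans hLr
  clear_value s c R
  intro hconv
  -- the three points
  set A : ℝ × ℝ := (R, 0) with hA_def
  set B : ℝ × ℝ := (R * c, R * s) with hB_def
  have hAmem : A ∈ {p : ℝ × ℝ | p ∈ coneA a ∧
      min (J pq p.1 p.2) (J pq (Psi a p).1 (Psi a p).2) ≤ 0} := by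
    simp only [Set.mem_setOf_eq]
    constructor
    · exact ⟨R, π / 2, hR0, by linarith, le_refl _, by
        simp [hA_def, Real.sin_pi_div_two, Real.cos_pi_div_two]⟩
    · exact le_trans (min_le_left _ _) hJR
  have hPsiB : Psi a B = (R, 0) := by
    simp only [Psi, hB_def, ← hs_def, ← hc_def, Prod.mk.injEq]
    constructor
    · linear_combination R * hcs
    · ring
  have hBmem : B ∈ {p : ℝ × ℝ | p ∈ coneA a ∧
      min (J pq p.1 p.2) (J pq (Psi a p).1 (Psi a p).2) ≤ 0} := by
    simp only [Set.mem_setOf_eq]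
    constructor
    · refine ⟨R, π / 2 - 2 * a, hR0, le_refl _, by linarith, ?_⟩
      rw [Real.sin_pi_div_two_sub, Real.cos_pi_div_two_sub, hB_def, hc_def, hs_def]
    · refine le_trans (min_le_right _ _) ?_
      rw [hPsiB]
      exact hJR
  have hM := hconv hAmem hBmem (by norm_num : (0:ℝ) ≤ 1/2)
    (by norm_num : (0:ℝ) ≤ 1/2) (by norm_num)
  have hMeq : ((1:ℝ)/2) • A + ((1:ℝ)/2) • B = ((R + R * c) / 2, R * s / 2) := by
    rw [hA_def, hB_def, Prod.smul_mk, Prod.smul_mk, Prod.mk_add_mk, Prod.mk.injEq]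
    constructor <;> simp <;> ring
  rw [hMeq] at hM
  obtain ⟨-, hMle⟩ := hM
  have hPsiM : Psi a ((R + R * c) / 2, R * s / 2) = ((R + R * c) / 2, R * s / 2) := by
    simp only [Psi, ← hs_def, ← hc_def, Prod.mk.injEq]
    constructor
    · linear_combination (R / 2) * hcs
    · ring
  rw [hPsiM, min_self] at hMle
  have hy : (((R + R * c) / 2, R * s / 2) : ℝ × ℝ).2 ≠ 0 := by
    simp only; positivity
  have hJM := J_lb pq hpq0 (((R + R * c) / 2, R * s / 2) : ℝ × ℝ).1
    (((R + R * c) / 2, R * s / 2) : ℝ × ℝ).2 hy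
  simp only at hJM hMle
  nlinarith
end
end
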